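/- For all t > 0, r > 0 and θ ∈ ℝ, if dist(k_θ · (e^{−2t}·i), e^{−2t}·i) ≤ r, then sin²(θ) ≤ sinh²(r/2)/sinh²(2t). -/

import Mathlib

open UpperHalfPlane

/-- The rotation matrix `[[cos θ, sin θ], [−sin θ, cos θ]]` as an element of `SL(2, ℝ)`. -/
noncomputable def rotSL (θ : ℝ) : Matrix.SpecialLinearGroup (Fin 2) ℝ :=
  ⟨!![Real.cos θ, Real.sin θ; -Real.sin θ, Real.cos θ], by
    rw [Matrix.det_fin_two_of]
    nlinarith [Real.sin_sq_add_cos_sq θ]⟩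

/-- The point `e^{−2t}·i` of the hyperbolic upper half-plane. -/
noncomputable def ptI (t : ℝ) : UpperHalfPlane :=
  ⟨⟨0, Real.exp (-(2 * t))⟩, by simpa using Real.exp_pos (-(2 * t))⟩

/-- Angle bound from the hyperbolic law of cosines: if
`dist (k_θ · e^{−2t} i, e^{−2t} i) ≤ r` then `sin² θ ≤ sinh²(r/2) / sinh²(2t)`. -/
theorem sin_sq_le_of_dist_rot_le (t r θ : ℝ) (ht : 0 < t) (hr : 0 < r)
    (h : dist (rotSL θ • ptI t) (ptI t) ≤ r) :
    Real.sin θ ^ 2 ≤ Real.sinh (r / 2) ^ 2 / Real.sinh (2 * t) ^ 2 := by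
  set y : ℝ := Real.exp (-(2 * t)) with hy
  have hy0 : 0 < y := Real.exp_pos _
  have hy1 : y < 1 := by
    rw [hy, Real.exp_lt_one_iff]; linarith
  set c := Real.cos θ with hcdef
  set s := Real.sin θ with hsdef
  have hsc : s ^ 2 + c ^ 2 = 1 := Real.sin_sq_add_cos_sq θ
  set D : ℝ := c ^ 2 + s ^ 2 * y ^ 2 with hD
  have hD0 : 0 < D := by nlinarith [sq_nonneg (c*y), sq_nonneg (s*y), mul_pos hy0 hy0, sq_nonneg c]
  have hcptI : ((ptI t : ℍ) : ℂ) = Complex.mk 0 y := rfl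
  have hzim : (ptI t).im = y := rfl
  have hden : ((-s : ℝ) : ℂ) * Complex.mk 0 y + ((c:ℝ) : ℂ) ≠ 0 := by
    intro h0
    have h1 := congrArg Complex.normSq h0
    simp only [Complex.normSq_apply, Complex.add_re, Complex.add_im, Complex.mul_re,
      Complex.mul_im, Complex.ofReal_re, Complex.ofReal_im, Complex.normSq_zero,
      Complex.zero_re, Complex.zero_im] at h1
    nlinarith [hD0]
  -- imaginary part of the rotated point
  have him : (rotSL θ • ptI t).im = y / D := by
    rw [specialLinearGroup_apply, UpperHalfPlane.mk_im]
    simp only [rotSL, Matrix.SpecialLinearGroup.coe_mk, Matrix.cons_val', Matrix.cons_val_zero,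
      Matrix.cons_val_one, Matrix.head_cons, Matrix.head_fin_const, Matrix.empty_val',
      Matrix.cons_val_fin_one, Algebra.algebraMap_self, RingHom.id_apply]
    rw [Complex.div_im, hcptI]
    simp only [Complex.normSq_apply, Complex.add_im, Complex.add_re, Complex.mul_im,
      Complex.mul_re, Complex.ofReal_re, Complex.ofReal_im, Complex.neg_re, Complex.neg_im,
      Matrix.cons_val', Matrix.cons_val_zero, Matrix.cons_val_one, Matrix.head_cons,
      Matrix.head_fin_const, Matrix.empty_val', Matrix.cons_val_fin_one, Matrix.of_apply,
      Fin.isValue]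
    rw [div_sub_div_same, div_eq_div_iff (by nlinarith [hD0]) (ne_of_gt hD0)]
    linear_combination (y * (s ^ 2 * y ^ 2 + c ^ 2)) * hsc
  -- coercion of the rotated point
  have hsmul : ((rotSL θ • ptI t : ℍ) : ℂ) =
      (((c:ℝ):ℂ) * Complex.mk 0 y + ((s:ℝ):ℂ)) / (((-s:ℝ):ℂ) * Complex.mk 0 y + ((c:ℝ):ℂ)) := by
    rw [show ((rotSL θ • ptI t : ℍ) : ℂ) = _ from congrArg UpperHalfPlane.coe
      (specialLinearGroup_apply (rotSL θ) (ptI t))]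
    rw [UpperHalfPlane.coe_mk]
    simp only [rotSL, Matrix.SpecialLinearGroup.coe_mk, Matrix.cons_val', Matrix.cons_val_zero,
      Matrix.cons_val_one, Matrix.head_cons, Matrix.head_fin_const, Matrix.empty_val',
      Matrix.cons_val_fin_one, Matrix.of_apply, Fin.isValue, Algebra.algebraMap_self,
      RingHom.id_apply, hcptI]
    rfl
  have hNden : Complex.normSq (((-s:ℝ):ℂ) * Complex.mk 0 y + ((c:ℝ):ℂ)) = D := by
    simp only [Complex.normSq_apply, Complex.add_re, Complex.add_im, Complex.mul_re,
      Complex.mul_im, Complex.ofReal_re, Complex.ofReal_im]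
    ring_nf
    rw [hD]; ring
  have hwz : ((rotSL θ • ptI t : ℍ) : ℂ) - Complex.mk 0 y =
      (((s:ℝ):ℂ) * (1 + (Complex.mk 0 y)^2)) / (((-s:ℝ):ℂ) * Complex.mk 0 y + ((c:ℝ):ℂ)) := by
    have hden' : ((c:ℝ):ℂ) - Complex.mk 0 y * ((s:ℝ):ℂ) ≠ 0 := by
      have he : ((c:ℝ):ℂ) - Complex.mk 0 y * ((s:ℝ):ℂ)
          = ((-s:ℝ):ℂ) * Complex.mk 0 y + ((c:ℝ):ℂ) := by push_cast; ring
      rw [he]; exact hden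
    rw [hsmul]
    rw [eq_div_iff hden, sub_mul, div_mul_cancel₀ _ hden]
    push_cast
    ring
  have hdist : dist ((rotSL θ • ptI t : ℍ) : ℂ) ((ptI t : ℍ) : ℂ) ^ 2
      = s ^ 2 * (1 - y ^ 2) ^ 2 / D := by
    rw [Complex.dist_eq, Complex.sq_norm, hcptI, hwz, Complex.normSq_div, hNden]
    congr 1
    simp only [Complex.normSq_apply, Complex.add_re, Complex.add_im, Complex.mul_re,
      Complex.mul_im, Complex.ofReal_re, Complex.ofReal_im, Complex.one_re, Complex.one_im,
      pow_two]
    ring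
  -- use the distance bound
  rw [dist_le_iff_le_sinh] at h
  have h2 : (dist ((rotSL θ • ptI t : ℍ) : ℂ) ((ptI t : ℍ) : ℂ) /
      (2 * Real.sqrt ((rotSL θ • ptI t).im * (ptI t).im))) ^ 2 ≤ Real.sinh (r / 2) ^ 2 :=
    pow_le_pow_left₀ (div_nonneg dist_nonneg (by positivity)) h 2
  rw [div_pow, mul_pow, Real.sq_sqrt (mul_pos (rotSL θ • ptI t).im_pos (ptI t).im_pos).le, hdist, him, hzim] at h2
  have hsinh2t : Real.sinh (2 * t) = (1 - y ^ 2) / (2 * y) := by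
    rw [Real.sinh_eq]
    have h3 : Real.exp (2*t) = (Real.exp (-(2*t)))⁻¹ := by
      rw [← Real.exp_neg, neg_neg]
    rw [h3, ← hy]
    rw [div_eq_div_iff (by norm_num) (by positivity)]
    field_simp
  have hsinh2t0 : 0 < Real.sinh (2 * t) := by
    rw [hsinh2t]; exact div_pos (by nlinarith) (by positivity)
  rw [le_div_iff₀ (pow_pos hsinh2t0 2), hsinh2t]
  have key : s ^ 2 * (1 - y ^ 2) ^ 2 / D / (2 ^ 2 * (y / D * y))
      = s ^ 2 * ((1 - y ^ 2) / (2 * y)) ^ 2 := by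
    rw [div_div]
    rw [show D * (2 ^ 2 * (y / D * y)) = (2 * y) ^ 2 * (D / D) by ring]
    rw [div_self (ne_of_gt hD0), mul_one, div_pow, mul_div_assoc]
  calc s ^ 2 * ((1 - y ^ 2) / (2 * y)) ^ 2
      = s ^ 2 * (1 - y ^ 2) ^ 2 / D / (2 ^ 2 * (y / D * y)) := key.symm
    _ ≤ Real.sinh (r / 2) ^ 2 := h2
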